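/- Quantum transport cost between two Dirac masses at the same location: for any P, Q ∈ S^d_{++}, the infimum over γ ∈ S^d_{++} of KL(γ|P) + KL(γ|Q) equals tr( P + Q − 2·exp( (log P + log Q)/2 ) ), and it is attained uniquely at γ = exp( (log P + log Q)/2 ). -/

import Mathlib

open Matrix

/-- Matrix exponential of a real matrix. -/
noncomputable def mexp {d : ℕ} (A : Matrix (Fin d) (Fin d) ℝ) : Matrix (Fin d) (Fin d) ℝ :=
  NormedSpace.exp A

/-- Matrix logarithm of a symmetric (hermitian) real matrix, defined through the
eigendecomposition `P = U diag(σ) Uᵀ` as `log P = U diag(log σ) Uᵀ` (junk value `0`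
on non-symmetric matrices). -/
noncomputable def mlog {d : ℕ} (A : Matrix (Fin d) (Fin d) ℝ) : Matrix (Fin d) (Fin d) ℝ :=
  if h : A.IsHermitian then
    (h.eigenvectorUnitary : Matrix (Fin d) (Fin d) ℝ)
      * diagonal (fun i => Real.log (h.eigenvalues i))
      * star (h.eigenvectorUnitary : Matrix (Fin d) (Fin d) ℝ)
  else 0

/-- Quantum (von Neumann) entropy `H(P) = -tr(P log P - P)`. -/
noncomputable def qH {d : ℕ} (P : Matrix (Fin d) (Fin d) ℝ) : ℝ :=
  -(P * mlog P - P).trace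

/-- Quantum Kullback-Leibler divergence `KL(P|Q) = tr(P log P - P log Q - P + Q)`. -/
noncomputable def qKL {d : ℕ} (P Q : Matrix (Fin d) (Fin d) ℝ) : ℝ :=
  (P * mlog P - P * mlog Q - P + Q).trace

namespace SingleDiracAux

open scoped Matrix.Norms.L2Operator

variable {d : ℕ}

lemma mlog_eq_cfc {A : Matrix (Fin d) (Fin d) ℝ} (hA : A.IsHermitian) :
    mlog A = cfc Real.log A := by
  rw [Matrix.IsHermitian.cfc_eq hA, mlog, dif_pos hA, Matrix.IsHermitian.cfc]
  congr 1

lemma mexp_eq_cfc {A : Matrix (Fin d) (Fin d) ℝ} (hA : A.IsHermitian) :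
    mexp A = cfc Real.exp A := by
  rw [mexp, CFC.real_exp_eq_normedSpace_exp hA]

lemma mexp_isHermitian {A : Matrix (Fin d) (Fin d) ℝ} (hA : A.IsHermitian) :
    (mexp A).IsHermitian := by
  rw [mexp_eq_cfc hA]
  exact cfc_predicate Real.exp A

lemma mlog_mexp {A : Matrix (Fin d) (Fin d) ℝ} (hA : A.IsHermitian) :
    mlog (mexp A) = A := by
  rw [mlog_eq_cfc (mexp_isHermitian hA)]
  exact CFC.log_exp A hA

lemma mlog_isHermitian {A : Matrix (Fin d) (Fin d) ℝ} (hA : A.IsHermitian) :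
    (mlog A).IsHermitian := by
  rw [mlog_eq_cfc hA]
  exact cfc_predicate Real.log A

lemma spectral_real {A : Matrix (Fin d) (Fin d) ℝ} (hA : A.IsHermitian) :
    A = (hA.eigenvectorUnitary : Matrix (Fin d) (Fin d) ℝ) * diagonal hA.eigenvalues
      * star (hA.eigenvectorUnitary : Matrix (Fin d) (Fin d) ℝ) := by
  conv_lhs => rw [hA.spectral_theorem]
  congr 1

lemma posDef_conj {U : Matrix (Fin d) (Fin d) ℝ} (hU : U ∈ unitary (Matrix (Fin d) (Fin d) ℝ))
    {v : Fin d → ℝ} (hv : ∀ i, 0 < v i) :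
    (U * diagonal v * star U).PosDef := by
  have hD : (diagonal v).PosDef := Matrix.PosDef.diagonal hv
  rw [Matrix.star_eq_conjTranspose]
  refine hD.mul_mul_conjTranspose_same fun x y hxy => ?_
  have := congrArg (fun z => z ᵥ* star U) hxy
  simpa [Matrix.vecMul_vecMul, (Unitary.mem_iff.mp hU).2] using this

lemma mexp_posDef {A : Matrix (Fin d) (Fin d) ℝ} (hA : A.IsHermitian) :
    (mexp A).PosDef := by
  rw [mexp_eq_cfc hA, Matrix.IsHermitian.cfc_eq hA, Matrix.IsHermitian.cfc]
  have : diagonal (RCLike.ofReal ∘ Real.exp ∘ hA.eigenvalues)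
      = diagonal (fun i => Real.exp (hA.eigenvalues i)) := by congr 1
  rw [this]
  exact posDef_conj (SetLike.coe_mem _) (fun i => Real.exp_pos _)

lemma trace_conj_diag {U : Matrix (Fin d) (Fin d) ℝ} (hU : star U * U = 1)
    (v : Fin d → ℝ) : (U * diagonal v * star U).trace = ∑ i, v i := by
  rw [Matrix.trace_mul_comm, ← mul_assoc, hU, one_mul, Matrix.trace_diagonal]

lemma trace_diag_sandwich (W : Matrix (Fin d) (Fin d) ℝ) (v w : Fin d → ℝ) :
    (diagonal v * (W * diagonal w * star W)).trace
      = ∑ i, ∑ j, v i * w j * (W i j)^2 := by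
  simp only [Matrix.trace, Matrix.diag_apply, Matrix.mul_apply, Matrix.diagonal_apply,
    Matrix.star_apply, star_trivial, Matrix.diagonal_mul, Matrix.mul_diagonal]
  refine Finset.sum_congr rfl fun i _ => ?_
  rw [Finset.sum_eq_single i (fun b _ hb => by rw [if_neg (Ne.symm hb), zero_mul])
    (fun h => absurd (Finset.mem_univ i) h), if_pos rfl, Finset.mul_sum]
  refine Finset.sum_congr rfl fun j _ => ?_
  rw [Finset.sum_eq_single j (fun b _ hb => by rw [if_neg hb, mul_zero])
    (fun h => absurd (Finset.mem_univ j) h), if_pos rfl]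
  ring

lemma trace_conj_diag_mul {U V : Matrix (Fin d) (Fin d) ℝ}
    (v w : Fin d → ℝ) (hU : U * star U = 1) (hU' : star U * U = 1) :
    ((U * diagonal v * star U) * (V * diagonal w * star V)).trace
      = ∑ i, ∑ j, v i * w j * ((star U * V) i j)^2 := by
  have h1 : (U * diagonal v * star U) * (V * diagonal w * star V)
      = U * (diagonal v * ((star U * V) * diagonal w * star (star U * V))) * star U := by
    simp only [Matrix.star_mul, star_star, Matrix.mul_assoc, hU, Matrix.mul_one]
  rw [h1, Matrix.trace_mul_comm, ← Matrix.mul_assoc, hU', Matrix.one_mul,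
    trace_diag_sandwich]

lemma klein_nonneg {x y : ℝ} (hx : 0 < x) (hy : 0 < y) :
    0 ≤ x * Real.log x - x * Real.log y - x + y := by
  have h := Real.log_le_sub_one_of_pos (div_pos hy hx)
  rw [Real.log_div hy.ne' hx.ne'] at h
  nlinarith [mul_le_mul_of_nonneg_left h hx.le, mul_div_cancel₀ y hx.ne']

lemma klein_pos {x y : ℝ} (hx : 0 < x) (hy : 0 < y) (hxy : x ≠ y) :
    0 < x * Real.log x - x * Real.log y - x + y := by
  have h := Real.log_lt_sub_one_of_pos (div_pos hy hx)
    (by simp [div_eq_one_iff_eq hx.ne', (Ne.symm hxy)])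
  rw [Real.log_div hy.ne' hx.ne'] at h
  nlinarith [mul_lt_mul_of_pos_left h hx, mul_div_cancel₀ y hx.ne']

lemma row_sum_sq {W : Matrix (Fin d) (Fin d) ℝ} (h : W * star W = 1) (i : Fin d) :
    ∑ j, (W i j)^2 = 1 := by
  have := congrFun (congrFun h i) i
  simpa [Matrix.mul_apply, Matrix.one_apply, sq] using this

lemma col_sum_sq {W : Matrix (Fin d) (Fin d) ℝ} (h : star W * W = 1) (j : Fin d) :
    ∑ i, (W i j)^2 = 1 := by
  have := congrFun (congrFun h j) j
  simpa [Matrix.mul_apply, Matrix.one_apply, sq, mul_comm] using this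

/-- Klein inequality: `qKL γ σ ≥ 0` with equality iff `γ = σ`, for positive definite
symmetric matrices. -/
lemma klein_matrix {γ σ : Matrix (Fin d) (Fin d) ℝ} (hγ : γ.PosDef) (hσ : σ.PosDef) :
    0 ≤ qKL γ σ ∧ (qKL γ σ = 0 → γ = σ) := by
  have hA : γ.IsHermitian := hγ.isHermitian
  have hB : σ.IsHermitian := hσ.isHermitian
  set U : Matrix (Fin d) (Fin d) ℝ := (hA.eigenvectorUnitary : Matrix (Fin d) (Fin d) ℝ)
    with hUdef
  set V : Matrix (Fin d) (Fin d) ℝ := (hB.eigenvectorUnitary : Matrix (Fin d) (Fin d) ℝ)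
    with hVdef
  set a : Fin d → ℝ := hA.eigenvalues with hadef
  set b : Fin d → ℝ := hB.eigenvalues with hbdef
  have ha : ∀ i, 0 < a i := hγ.eigenvalues_pos
  have hb : ∀ i, 0 < b i := hσ.eigenvalues_pos
  have hUU : star U * U = 1 := Unitary.coe_star_mul_self hA.eigenvectorUnitary
  have hUU' : U * star U = 1 := Unitary.coe_mul_star_self hA.eigenvectorUnitary
  have hVV : star V * V = 1 := Unitary.coe_star_mul_self hB.eigenvectorUnitary
  have hVV' : V * star V = 1 := Unitary.coe_mul_star_self hB.eigenvectorUnitary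
  set W : Matrix (Fin d) (Fin d) ℝ := star U * V with hWdef
  have hWW : W * star W = 1 := by
    rw [hWdef, Matrix.star_mul, star_star, Matrix.mul_assoc, ← Matrix.mul_assoc V,
      hVV', Matrix.one_mul, hUU]
  have hWW' : star W * W = 1 := by
    rw [hWdef, Matrix.star_mul, star_star, Matrix.mul_assoc, ← Matrix.mul_assoc U,
      hUU', Matrix.one_mul, hVV]
  have specγ : γ = U * diagonal a * star U := spectral_real hA
  have specσ : σ = V * diagonal b * star V := spectral_real hB
  have mlogγ : mlog γ = U * diagonal (fun i => Real.log (a i)) * star U := by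
    rw [mlog, dif_pos hA]
  have mlogσ : mlog σ = V * diagonal (fun i => Real.log (b i)) * star V := by
    rw [mlog, dif_pos hB]
  have sandwich : ∀ (p q : Fin d → ℝ),
      (U * diagonal p * star U) * (U * diagonal q * star U)
        = U * diagonal (fun i => p i * q i) * star U := by
    intro p q
    have h : ∀ (A B C D E F : Matrix (Fin d) (Fin d) ℝ),
        (A * B * C) * (D * E * F) = A * (B * (C * D) * E) * F := by
      intros; simp only [Matrix.mul_assoc]
    rw [h, hUU, Matrix.mul_one, diagonal_mul_diagonal]
  have tγlogγ : (γ * mlog γ).trace = ∑ i, a i * Real.log (a i) := by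
    rw [mlogγ, specγ, sandwich, trace_conj_diag hUU]
  have tγlogσ : (γ * mlog σ).trace = ∑ i, ∑ j, a i * Real.log (b j) * (W i j)^2 := by
    rw [mlogσ, specγ, trace_conj_diag_mul _ _ hUU' hUU]
  have tγ : γ.trace = ∑ i, a i := by rw [specγ, trace_conj_diag hUU]
  have tσ : σ.trace = ∑ i, b i := by rw [specσ, trace_conj_diag hVV]
  have key : qKL γ σ = ∑ i, ∑ j,
      (W i j)^2 * (a i * Real.log (a i) - a i * Real.log (b j) - a i + b j) := by
    have h1 : ∀ f : Fin d → ℝ, ∑ i, ∑ j, (W i j)^2 * f i = ∑ i, f i := by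
      intro f
      refine Finset.sum_congr rfl fun i _ => ?_
      rw [← Finset.sum_mul, row_sum_sq hWW i, one_mul]
    have h2 : ∀ f : Fin d → ℝ, ∑ i, ∑ j, (W i j)^2 * f j = ∑ j, f j := by
      intro f
      rw [Finset.sum_comm]
      refine Finset.sum_congr rfl fun j _ => ?_
      rw [← Finset.sum_mul, col_sum_sq hWW' j, one_mul]
    have e1 : ∑ i, ∑ j, (W i j)^2
          * (a i * Real.log (a i) - a i * Real.log (b j) - a i + b j)
        = (∑ i, ∑ j, (W i j)^2 * (a i * Real.log (a i)))
          - (∑ i, ∑ j, a i * Real.log (b j) * (W i j)^2)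
          - (∑ i, ∑ j, (W i j)^2 * a i)
          + (∑ i, ∑ j, (W i j)^2 * b j) := by
      simp only [mul_sub, mul_add, Finset.sum_sub_distrib, Finset.sum_add_distrib]
      congr 3
      · refine Finset.sum_congr rfl fun i _ => Finset.sum_congr rfl fun j _ => by ring
    rw [e1, h1 (fun i => a i * Real.log (a i)), h1 a, h2 b, qKL, Matrix.trace_add,
      Matrix.trace_sub, Matrix.trace_sub, tγlogγ, tγlogσ, tγ, tσ]
  have term_nonneg : ∀ i, ∀ j, 0 ≤ (W i j)^2
      * (a i * Real.log (a i) - a i * Real.log (b j) - a i + b j) :=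
    fun i j => mul_nonneg (sq_nonneg _) (klein_nonneg (ha i) (hb j))
  constructor
  · rw [key]
    exact Finset.sum_nonneg fun i _ => Finset.sum_nonneg fun j _ => term_nonneg i j
  · intro h0
    rw [key] at h0
    have hrow := (Finset.sum_eq_zero_iff_of_nonneg
      (fun i _ => Finset.sum_nonneg fun j _ => term_nonneg i j)).mp h0
    have hterm : ∀ i j, (W i j)^2
        * (a i * Real.log (a i) - a i * Real.log (b j) - a i + b j) = 0 := by
      intro i j
      exact (Finset.sum_eq_zero_iff_of_nonneg (fun j _ => term_nonneg i j)).mp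
        (hrow i (Finset.mem_univ i)) j (Finset.mem_univ j)
    have hWab : ∀ i j, a i * W i j = W i j * b j := by
      intro i j
      by_cases hij : a i = b j
      · rw [hij, mul_comm]
      · have := hterm i j
        have hk := klein_pos (ha i) (hb j) hij
        have : (W i j)^2 = 0 := by
          by_contra hne
          exact hne (by nlinarith [sq_nonneg (W i j)])
        have hW0 : W i j = 0 := by
          exact pow_eq_zero_iff (n := 2) (by norm_num) |>.mp this
        rw [hW0]; ring
    have hDW : diagonal a * W = W * diagonal b := by
      ext i j
      rw [Matrix.diagonal_mul, Matrix.mul_diagonal]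
      exact hWab i j
    have hsU : star U = W * star V := by
      rw [hWdef, Matrix.mul_assoc, hVV', Matrix.mul_one]
    have hUW : U * W = V := by
      rw [hWdef, ← Matrix.mul_assoc, hUU', Matrix.one_mul]
    calc γ = U * diagonal a * star U := specγ
      _ = U * (diagonal a * W) * star V := by
          rw [hsU, Matrix.mul_assoc, ← Matrix.mul_assoc (diagonal a), Matrix.mul_assoc U]
      _ = U * W * diagonal b * star V := by
          rw [hDW, ← Matrix.mul_assoc, ← Matrix.mul_assoc]
      _ = V * diagonal b * star V := by rw [hUW]
      _ = σ := specσ.symm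

end SingleDiracAux

open SingleDiracAux in
/-- **Quantum transport cost between two Dirac masses at the same location.**
For `P, Q ≻ 0`, the infimum over `γ ≻ 0` of `KL(γ|P) + KL(γ|Q)` equals
`tr(P + Q - 2 exp((log P + log Q)/2))`, attained uniquely at
`γ = exp((log P + log Q)/2)`. -/
theorem single_dirac_cost {d : ℕ} (P Q : Matrix (Fin d) (Fin d) ℝ)
    (hP : P.PosDef) (hQ : Q.PosDef) :
    (mexp ((2:ℝ)⁻¹ • (mlog P + mlog Q))).PosDef ∧
    (qKL (mexp ((2:ℝ)⁻¹ • (mlog P + mlog Q))) P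
        + qKL (mexp ((2:ℝ)⁻¹ • (mlog P + mlog Q))) Q
      = (P + Q - (2:ℝ) • mexp ((2:ℝ)⁻¹ • (mlog P + mlog Q))).trace) ∧
    (∀ γ : Matrix (Fin d) (Fin d) ℝ, γ.PosDef →
      (P + Q - (2:ℝ) • mexp ((2:ℝ)⁻¹ • (mlog P + mlog Q))).trace
        ≤ qKL γ P + qKL γ Q) ∧
    (∀ γ : Matrix (Fin d) (Fin d) ℝ, γ.PosDef →
      qKL γ P + qKL γ Q
          = (P + Q - (2:ℝ) • mexp ((2:ℝ)⁻¹ • (mlog P + mlog Q))).trace →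
        γ = mexp ((2:ℝ)⁻¹ • (mlog P + mlog Q))) := by
  have hMP := mlog_isHermitian hP.isHermitian
  have hMQ := mlog_isHermitian hQ.isHermitian
  set M : Matrix (Fin d) (Fin d) ℝ := (2:ℝ)⁻¹ • (mlog P + mlog Q) with hMdef
  have hM : M.IsHermitian := by
    rw [hMdef, Matrix.IsHermitian, Matrix.conjTranspose_smul, Matrix.conjTranspose_add,
      hMP, hMQ]
    norm_num
  set G : Matrix (Fin d) (Fin d) ℝ := mexp M with hGdef
  have hGpd : G.PosDef := mexp_posDef hM
  have hlogG : mlog G = M := mlog_mexp hM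
  have split : ∀ γ : Matrix (Fin d) (Fin d) ℝ,
      qKL γ P + qKL γ Q = 2 * qKL γ G + (P + Q - (2:ℝ) • G).trace := by
    intro γ
    simp only [qKL, hlogG, hMdef, Matrix.mul_smul, Matrix.mul_add, Matrix.trace_add,
      Matrix.trace_sub, Matrix.trace_smul, smul_eq_mul]
    ring
  refine ⟨hGpd, ?_, fun γ hγ => ?_, fun γ hγ heq => ?_⟩
  · rw [split G]
    have : qKL G G = 0 := by
      simp [qKL]
    rw [this]; ring
  · rw [split γ]
    have := (klein_matrix hγ hGpd).1
    linarith
  · rw [split γ] at heq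
    have h0 : qKL γ G = 0 := by linarith
    exact (klein_matrix hγ hGpd).2 h0
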